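/- The data center network D_{k,n} (k ≥ 0, n ≥ 2) is (n+k-1)-regular, and its vertex connectivity and edge connectivity both equal n + k - 1. -/

import Mathlib

open SimpleGraph
/-- Number of vertices of `D_{k,n}`. -/
def dcellT (n : ℕ) : ℕ → ℕ
  | 0 => n
  | k+1 => dcellT n k * (dcellT n k + 1)

/-- Vertex set of `D_{k,n}`. -/
def DCellVtx (n : ℕ) : ℕ → Type
  | 0 => Fin n
  | k+1 => Fin (dcellT n k + 1) × DCellVtx n k

/-- The uid of a vertex of `D_{k,n}`. -/
def dcellUid (n : ℕ) : (k : ℕ) → DCellVtx n k → ℕ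
  | 0, a => a.val
  | k+1, a => dcellUid n k a.2 + a.1.val * dcellT n k

/-- Adjacency in `D_{k,n}`: inside a common copy of `D_{k-1,n}` use the recursive rule;
between two copies use the DCell connection rule. -/
def dcellAdj (n : ℕ) : (k : ℕ) → DCellVtx n k → DCellVtx n k → Prop
  | 0, a, b => a ≠ b
  | k+1, a, b =>
      (a.1 = b.1 ∧ dcellAdj n k a.2 b.2) ∨
      (a.1.val < b.1.val ∧ a.1.val = dcellUid n k b.2 ∧ b.1.val = dcellUid n k a.2 + 1) ∨
      (b.1.val < a.1.val ∧ b.1.val = dcellUid n k a.2 ∧ a.1.val = dcellUid n k b.2 + 1)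

/-- The `k`-dimensional data center network with `n`-port switches. -/
def DCell (n k : ℕ) : SimpleGraph (DCellVtx n k) where
  Adj := dcellAdj n k
  symm := by
    induction k with
    | zero => constructor; intro a b h; exact h.symm
    | succ k ih =>
      constructor
      rintro a b (⟨h1, h2⟩ | ⟨h1, h2, h3⟩ | ⟨h1, h2, h3⟩)
      · exact Or.inl ⟨h1.symm, ih.symm _ _ h2⟩
      · exact Or.inr (Or.inr ⟨h1, h2, h3⟩)
      · exact Or.inr (Or.inl ⟨h1, h2, h3⟩)
  loopless := by
    induction k with
    | zero => constructor; intro a h; exact h rfl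
    | succ k ih =>
      constructor
      rintro a (⟨h1, h2⟩ | ⟨h1, h2, h3⟩ | ⟨h1, h2, h3⟩)
      · exact ih.irrefl a.2 h2
      · omega
      · omega

/-- Two vertices of `D_{k,n}` lie in a common copy of `K_n` (level-0 cell) iff all
coordinates except the last agree. -/
def dcellSameCell (n : ℕ) : (k : ℕ) → DCellVtx n k → DCellVtx n k → Prop
  | 0, _, _ => True
  | k+1, a, b => a.1 = b.1 ∧ dcellSameCell n k a.2 b.2
/-- The (vertex) connectivity of `G`: the least size of a set of vertices whose removal
disconnects the graph or reduces it to at most one vertex. -/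
noncomputable def vertexConnectivity {V : Type*} (G : SimpleGraph V) : ℕ :=
  sInf {m | ∃ S : Set V, S.ncard = m ∧
    (¬ (G.induce (Sᶜ : Set V)).Connected ∨ (Sᶜ : Set V).Subsingleton)}

/-- The edge connectivity of `G`: the least size of a set of edges whose removal
disconnects the graph. -/
noncomputable def edgeConnectivity {V : Type*} (G : SimpleGraph V) : ℕ :=
  sInf {m | ∃ F : Set (Sym2 V), F.ncard = m ∧ ¬ (G.deleteEdges F).Connected}

/-- `G` is `k`-connected. -/
def NConnected {V : Type*} (k : ℕ) (G : SimpleGraph V) : Prop :=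
  k < Nat.card V ∧ ∀ S : Set V, S.ncard < k → (G.induce (Sᶜ : Set V)).Connected

-- basic helpers
namespace DCellAux
variable {n : ℕ}

theorem dcellT_pos (hn : 1 ≤ n) : ∀ k, 0 < dcellT n k
  | 0 => hn
  | k+1 => by have := dcellT_pos hn k; simp only [dcellT]; positivity

theorem dcellT_ge (hn : 2 ≤ n) : ∀ k, n + k ≤ dcellT n k
  | 0 => le_refl n
  | k+1 => by
      have h := dcellT_ge hn k
      simp only [dcellT]
      nlinarith

instance dcellFinite (n : ℕ) : ∀ k, Finite (DCellVtx n k)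
  | 0 => inferInstanceAs (Finite (Fin n))
  | k+1 =>
      have := dcellFinite n k
      inferInstanceAs (Finite (Fin (dcellT n k + 1) × DCellVtx n k))

theorem card_vtx (n : ℕ) : ∀ k, Nat.card (DCellVtx n k) = dcellT n k
  | 0 => by simp [DCellVtx, dcellT]
  | k+1 => by
      have h := card_vtx n k
      show Nat.card (Fin (dcellT n k + 1) × DCellVtx n k) = dcellT n (k+1)
      rw [Nat.card_prod, h, Nat.card_eq_fintype_card, Fintype.card_fin]
      simp [dcellT]; ring

theorem uid_lt (hn : 1 ≤ n) : ∀ k (a : DCellVtx n k), dcellUid n k a < dcellT n k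
  | 0, a => a.isLt
  | k+1, a => by
      have h := uid_lt hn k a.2
      have h2 : a.1.val ≤ dcellT n k := Nat.lt_succ_iff.mp a.1.isLt
      show dcellUid n k a.2 + a.1.val * dcellT n k < dcellT n k * (dcellT n k + 1)
      nlinarith

theorem uid_inj (hn : 1 ≤ n) : ∀ k (a b : DCellVtx n k),
    dcellUid n k a = dcellUid n k b → a = b
  | 0, a, b, h => Fin.ext h
  | k+1, a, b, h => by
      have ha := uid_lt hn k a.2
      have hb := uid_lt hn k b.2
      have h' : dcellUid n k a.2 + a.1.val * dcellT n k
          = dcellUid n k b.2 + b.1.val * dcellT n k := h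
      have h1 : a.1.val = b.1.val := by
        rcases lt_trichotomy a.1.val b.1.val with hlt | he | hgt
        · nlinarith
        · exact he
        · nlinarith
      have h2 : dcellUid n k a.2 = dcellUid n k b.2 := by rw [h1] at h'; omega
      have := uid_inj hn k a.2 b.2 h2
      exact Prod.ext (Fin.ext h1) this

theorem uid_surj (hn : 1 ≤ n) : ∀ k (m : ℕ), m < dcellT n k →
    ∃ a : DCellVtx n k, dcellUid n k a = m
  | 0, m, hm => ⟨⟨m, hm⟩, rfl⟩
  | k+1, m, hm => by
      have ht := dcellT_pos hn k
      have hmod : m % dcellT n k < dcellT n k := Nat.mod_lt _ ht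
      obtain ⟨a2, ha2⟩ := uid_surj hn k (m % dcellT n k) hmod
      have hdiv : m / dcellT n k < dcellT n k + 1 := by
        have : m < dcellT n k * (dcellT n k + 1) := hm
        rw [Nat.div_lt_iff_lt_mul ht]; nlinarith
      refine ⟨(⟨m / dcellT n k, hdiv⟩, a2), ?_⟩
      show dcellUid n k a2 + (m / dcellT n k) * dcellT n k = m
      rw [ha2]
      rw [Nat.mul_comm]
      exact Nat.mod_add_div m (dcellT n k)

end DCellAux
namespace DCellAux
variable {n : ℕ}

/-- Cross adjacency at level `k+1`: vertices in different copies. -/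
theorem cross_cases {k : ℕ} {a c : DCellVtx n (k+1)} (h : dcellAdj n (k+1) a c)
    (hne : c.1 ≠ a.1) :
    (a.1.val < c.1.val ∧ a.1.val = dcellUid n k c.2 ∧ c.1.val = dcellUid n k a.2 + 1) ∨
    (c.1.val < a.1.val ∧ c.1.val = dcellUid n k a.2 ∧ a.1.val = dcellUid n k c.2 + 1) := by
  rcases h with ⟨h1, _⟩ | h | h
  · exact absurd h1.symm hne
  · exact Or.inl h
  · exact Or.inr h

theorem cross_nbr (hn : 1 ≤ n) (k : ℕ) (a : DCellVtx n (k+1)) :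
    ∃ b : DCellVtx n (k+1), b.1 ≠ a.1 ∧ dcellAdj n (k+1) a b ∧
      ∀ c : DCellVtx n (k+1), dcellAdj n (k+1) a c → c.1 ≠ a.1 → c = b := by
  obtain ⟨i, x⟩ := a
  have hu := uid_lt hn k x
  set u := dcellUid n k x with hudef
  have hi : i.val ≤ dcellT n k := Nat.lt_succ_iff.mp i.isLt
  by_cases hc : i.val ≤ u
  · -- neighbor in copy u+1
    obtain ⟨y, hy⟩ := uid_surj hn k i.val (lt_of_le_of_lt hc hu)
    refine ⟨(⟨u + 1, by omega⟩, y), ?_, ?_, ?_⟩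
    · intro h; have := congrArg Fin.val h; simp at this; omega
    · exact Or.inr (Or.inl ⟨by simp; omega, by simp [hy], by simp; exact hudef⟩)
    · rintro ⟨j, z⟩ hadj hne
      rcases cross_cases hadj hne with ⟨h1, h2, h3⟩ | ⟨h1, h2, h3⟩
      · have hz : z = y := uid_inj hn k z y (by rw [hy]; exact h2.symm)
        have hj : j = (⟨u + 1, by omega⟩ : Fin (dcellT n k + 1)) := Fin.ext h3
        rw [hz, hj]
      · simp only at h1 h2 h3; omega
  · -- i.val > u; neighbor in copy u
    push_neg at hc
    obtain ⟨y, hy⟩ := uid_surj hn k (i.val - 1) (by omega)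
    refine ⟨(⟨u, by omega⟩, y), ?_, ?_, ?_⟩
    · intro h; have := congrArg Fin.val h; simp at this; omega
    · exact Or.inr (Or.inr ⟨by simp; omega, by simp; exact hudef, by simp [hy]; omega⟩)
    · rintro ⟨j, z⟩ hadj hne
      rcases cross_cases hadj hne with ⟨h1, h2, h3⟩ | ⟨h1, h2, h3⟩
      · simp only at h1 h2 h3; omega
      · have hz : z = y := uid_inj hn k z y (by rw [hy]; simp only at h3; omega)
        have hj : j = (⟨u, by omega⟩ : Fin (dcellT n k + 1)) := Fin.ext h2
        rw [hz, hj]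

theorem cross_between (hn : 1 ≤ n) (k : ℕ) (i j : Fin (dcellT n k + 1))
    (hij : i.val < j.val) :
    ∃ x y : DCellVtx n k, dcellAdj n (k+1) (i, x) (j, y) := by
  have hj : j.val ≤ dcellT n k := Nat.lt_succ_iff.mp j.isLt
  obtain ⟨x, hx⟩ := uid_surj hn k (j.val - 1) (by omega)
  obtain ⟨y, hy⟩ := uid_surj hn k i.val (by omega)
  exact ⟨x, y, Or.inr (Or.inl ⟨hij, by simp [hy], by simp [hx]; omega⟩)⟩

end DCellAux
namespace DCellAux

/-- A graph with few non-edges is connected. -/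
theorem connected_of_few_nonedges {V : Type*} [Finite V] [Nonempty V] (G : SimpleGraph V)
    (h : {e : Sym2 V | ¬ e.IsDiag ∧ e ∉ G.edgeSet}.ncard + 2 ≤ Nat.card V) :
    G.Connected := by
  classical
  rw [SimpleGraph.connected_iff]
  refine ⟨fun a b => ?_, inferInstance⟩
  by_cases hab : a = b
  · exact hab ▸ SimpleGraph.Reachable.refl a
  by_cases hadj : G.Adj a b
  · exact hadj.reachable
  have hcomm : ∃ c, G.Adj a c ∧ G.Adj c b := by
    by_contra hcomm
    push_neg at hcomm
    set N := {e : Sym2 V | ¬ e.IsDiag ∧ e ∉ G.edgeSet} with hN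
    have hmem : s(a, b) ∈ N := ⟨by simp [hab], by simpa using hadj⟩
    set f : V → Sym2 V := fun c => if G.Adj a c then s(c, b) else s(a, c) with hf
    have hmaps : ∀ c ∈ ({a, b} : Set V)ᶜ, f c ∈ N \ {s(a, b)} := by
      intro c hc
      simp only [Set.mem_compl_iff, Set.mem_insert_iff, Set.mem_singleton_iff, not_or] at hc
      obtain ⟨hca, hcb⟩ := hc
      by_cases hac : G.Adj a c
      · have hcbadj : ¬ G.Adj c b := hcomm c hac
        have hfc : f c = s(c, b) := by simp [hf, if_pos hac]
        rw [hfc]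
        refine ⟨⟨by simp [hcb], by simpa using hcbadj⟩, ?_⟩
        simp only [Set.mem_singleton_iff, Sym2.eq_iff]
        push_neg
        tauto
      · have hfc : f c = s(a, c) := by simp [hf, if_neg hac]
        rw [hfc]
        refine ⟨⟨by simp [Ne.symm hca], by simpa using hac⟩, ?_⟩
        simp only [Set.mem_singleton_iff, Sym2.eq_iff]
        push_neg
        tauto
    have hinj : Set.InjOn f (({a, b} : Set V)ᶜ) := by
      intro c hc d hd hcd
      simp only [Set.mem_compl_iff, Set.mem_insert_iff, Set.mem_singleton_iff, not_or] at hc hd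
      simp only [hf] at hcd
      split_ifs at hcd with h1 h2 h2 <;> rw [Sym2.eq_iff] at hcd <;> tauto
    have hle : (({a, b} : Set V)ᶜ).ncard ≤ (N \ {s(a, b)}).ncard :=
      Set.ncard_le_ncard_of_injOn f hmaps hinj (Set.toFinite _)
    have h1 : (N \ {s(a, b)}).ncard = N.ncard - 1 :=
      Set.ncard_diff_singleton_of_mem hmem
    have h2 : ({a, b} : Set V).ncard = 2 := Set.ncard_pair hab
    have h3 : ({a, b} : Set V).ncard + (({a, b} : Set V)ᶜ).ncard = Nat.card V :=
      Set.ncard_add_ncard_compl _ (Set.toFinite _) (Set.toFinite _)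
    have h4 : 0 < N.ncard := (Set.ncard_pos (Set.toFinite _)).mpr ⟨_, hmem⟩
    omega
  obtain ⟨c, h1, h2⟩ := hcomm
  exact h1.reachable.trans h2.reachable

theorem reach_transfer {V I : Type*} (G : SimpleGraph V) (f : V → I) (H : SimpleGraph I)
    (hfib : ∀ u v, f u = f v → G.Reachable u v)
    (hlift : ∀ i j, H.Adj i j → ∃ u v, f u = i ∧ f v = j ∧ G.Adj u v) :
    ∀ {i j : I}, H.Walk i j → ∀ u v, f u = i → f v = j → G.Reachable u v := by
  intro i j w
  induction w with
  | nil => exact fun u v hu hv => hfib u v (hu.trans hv.symm)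
  | cons hadj p ih =>
    intro u v hu hv
    obtain ⟨u', v', hu', hv', hG⟩ := hlift _ _ hadj
    exact ((hfib u u' (by rw [hu, hu'])).trans hG.reachable).trans (ih v' v hv' hv)

theorem connected_of_quotient {V I : Type*} (G : SimpleGraph V) (f : V → I)
    (H : SimpleGraph I) (hsurj : Function.Surjective f)
    (hfib : ∀ u v, f u = f v → G.Reachable u v)
    (hlift : ∀ i j, H.Adj i j → ∃ u v, f u = i ∧ f v = j ∧ G.Adj u v)
    (hH : H.Connected) : G.Connected := by
  have hI : Nonempty I := hH.nonempty
  obtain ⟨u0⟩ := hI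
  obtain ⟨v0, _⟩ := hsurj u0
  rw [SimpleGraph.connected_iff]
  refine ⟨fun u v => ?_, ⟨v0⟩⟩
  obtain ⟨w⟩ := hH.preconnected (f u) (f v)
  exact reach_transfer G f H hfib hlift w u v rfl rfl

end DCellAux
namespace DCellAux
variable {n : ℕ}

noncomputable def crossFn (hn : 1 ≤ n) (k : ℕ) (a : DCellVtx n (k+1)) : DCellVtx n (k+1) :=
  (cross_nbr hn k a).choose

theorem crossFn_fst (hn : 1 ≤ n) (k : ℕ) (a : DCellVtx n (k+1)) :
    (crossFn hn k a).1 ≠ a.1 := (cross_nbr hn k a).choose_spec.1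

theorem crossFn_adj (hn : 1 ≤ n) (k : ℕ) (a : DCellVtx n (k+1)) :
    dcellAdj n (k+1) a (crossFn hn k a) := (cross_nbr hn k a).choose_spec.2.1

theorem crossFn_uniq (hn : 1 ≤ n) (k : ℕ) (a c : DCellVtx n (k+1))
    (h : dcellAdj n (k+1) a c) (hne : c.1 ≠ a.1) : c = crossFn hn k a :=
  (cross_nbr hn k a).choose_spec.2.2 c h hne

theorem degree_eq (hn : 2 ≤ n) : ∀ k (v : DCellVtx n k),
    ((DCell n k).neighborSet v).ncard = n + k - 1
  | 0, v => by
      have h1 : (DCell n 0).neighborSet v = ({v} : Set (DCellVtx n 0))ᶜ := by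
        ext b
        simp only [SimpleGraph.mem_neighborSet, Set.mem_compl_iff, Set.mem_singleton_iff]
        show dcellAdj n 0 v b ↔ ¬ b = v
        exact ⟨fun h => fun hb => h hb.symm, fun h => fun hb => h hb.symm⟩
      rw [h1]
      have h2 := Set.ncard_add_ncard_compl ({v} : Set (DCellVtx n 0))
        (Set.toFinite _) (Set.toFinite _)
      rw [Set.ncard_singleton] at h2
      rw [card_vtx n 0] at h2
      have h3 : dcellT n 0 = n := rfl
      show _ = n + 0 - 1
      omega
  | k+1, v => by
      have hn1 : 1 ≤ n := le_trans (by norm_num) hn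
      have ihd := degree_eq hn k v.2
      have hkey : (DCell n (k+1)).neighborSet v =
          insert (crossFn hn1 k v) ((fun x => ((v.1, x) : DCellVtx n (k+1))) ''
            ((DCell n k).neighborSet v.2)) := by
        ext c
        simp only [SimpleGraph.mem_neighborSet, Set.mem_insert_iff, Set.mem_image]
        constructor
        · intro h
          by_cases hc : c.1 = v.1
          · refine Or.inr ⟨c.2, ?_, ?_⟩
            · rcases h with ⟨_, h2⟩ | ⟨h1, _, _⟩ | ⟨h1, _, _⟩
              · exact h2
              · exact absurd (hc ▸ h1) (lt_irrefl _)
              · exact absurd (hc ▸ h1) (lt_irrefl _)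
            · exact Prod.ext hc.symm rfl
          · exact Or.inl (crossFn_uniq hn1 k v c h hc)
        · rintro (rfl | ⟨x, hx, rfl⟩)
          · exact crossFn_adj hn1 k v
          · exact Or.inl ⟨rfl, hx⟩
      rw [hkey]
      have hnotmem : crossFn hn1 k v ∉
          ((fun x => ((v.1, x) : DCellVtx n (k+1))) '' ((DCell n k).neighborSet v.2)) := by
        rintro ⟨x, _, hx⟩
        exact crossFn_fst hn1 k v (by rw [← hx])
      erw [Set.ncard_insert_of_notMem hnotmem (Set.toFinite _),
        Set.ncard_image_of_injective _ (fun x y hxy => (Prod.mk.injEq _ _ _ _ ▸ hxy).2), ihd]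
      omega

theorem lift_reach_induce {k : ℕ} (S : Set (DCellVtx n (k+1))) (j : Fin (dcellT n k + 1))
    (T : Set (DCellVtx n k))
    (hT : ∀ v : DCellVtx n k, v ∉ T → ((j, v) : DCellVtx n (k+1)) ∉ S) :
    ∀ (a b : ↑(Tᶜ)), ((DCell n k).induce Tᶜ).Walk a b →
      ((DCell n (k+1)).induce Sᶜ).Reachable ⟨(j, a.1), hT a.1 a.2⟩ ⟨(j, b.1), hT b.1 b.2⟩ := by
  intro a b w
  induction w with
  | nil => exact SimpleGraph.Reachable.refl _
  | @cons x y z h p ih =>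
    refine SimpleGraph.Adj.reachable ?_ |>.trans ih
    show dcellAdj n (k+1) (j, x.1) (j, y.1)
    exact Or.inl ⟨rfl, h⟩

theorem lift_reach_del {k : ℕ} (F : Set (Sym2 (DCellVtx n (k+1)))) (j : Fin (dcellT n k + 1))
    (T : Set (Sym2 (DCellVtx n k)))
    (hT : ∀ x y : DCellVtx n k, s(x, y) ∉ T →
      (s((j, x), (j, y)) : Sym2 (DCellVtx n (k+1))) ∉ F) :
    ∀ {a b : DCellVtx n k}, ((DCell n k).deleteEdges T).Walk a b →
      ((DCell n (k+1)).deleteEdges F).Reachable (j, a) (j, b) := by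
  intro a b w
  induction w with
  | nil => exact SimpleGraph.Reachable.refl _
  | @cons x y z h p ih =>
    rw [SimpleGraph.deleteEdges_adj] at h
    refine SimpleGraph.Adj.reachable ?_ |>.trans ih
    apply SimpleGraph.deleteEdges_adj.mpr
    exact ⟨Or.inl ⟨rfl, h.1⟩, hT x y h.2⟩

end DCellAux
namespace DCellAux
variable {n : ℕ}

theorem conn_vertex (hn : 2 ≤ n) : ∀ k (S : Set (DCellVtx n k)),
    S.ncard + 2 ≤ n + k → ((DCell n k).induce Sᶜ).Connected
  | 0, S, hS => by
      have hcard := card_vtx n 0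
      have ht0 : dcellT n 0 = n := rfl
      have hcompl := Set.ncard_add_ncard_compl S (Set.toFinite _) (Set.toFinite _)
      have hpos : 0 < (Sᶜ).ncard := by omega
      have hne : (Sᶜ).Nonempty := (Set.ncard_pos (Set.toFinite _)).mp hpos
      rw [SimpleGraph.connected_iff]
      refine ⟨fun a b => ?_, hne.to_subtype⟩
      by_cases hab : a = b
      · exact hab ▸ SimpleGraph.Reachable.refl a
      · refine SimpleGraph.Adj.reachable ?_
        show dcellAdj n 0 a.1 b.1
        exact fun h => hab (Subtype.ext h)
  | k+1, S, hS => by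
      classical
      have hn1 : 1 ≤ n := by omega
      have ht := dcellT_ge hn k
      have htpos := dcellT_pos hn1 k
      have hcardV := card_vtx n k
      have hSle : S.ncard ≤ n + k - 1 := by omega
      set Sj : Fin (dcellT n k + 1) → Set (DCellVtx n k) :=
        fun j => {v | ((j, v) : DCellVtx n (k+1)) ∈ S} with hSjdef
      have hSj_le : ∀ j, (Sj j).ncard ≤ S.ncard := fun j =>
        Set.ncard_le_ncard_of_injOn (fun v => ((j, v) : DCellVtx n (k+1)))
          (fun v hv => hv) (fun x _ y _ h => congrArg Prod.snd h) (Set.toFinite _)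
      have copy_reach : ∀ j, (Sj j).ncard + 2 ≤ n + k →
          ∀ x y (hx : (j, x) ∈ Sᶜ) (hy : (j, y) ∈ Sᶜ),
          ((DCell n (k+1)).induce Sᶜ).Reachable ⟨(j, x), hx⟩ ⟨(j, y), hy⟩ := by
        intro j hj x y hx hy
        have hconn := conn_vertex hn k (Sj j) hj
        obtain ⟨w⟩ := hconn.preconnected ⟨x, hx⟩ ⟨y, hy⟩
        exact lift_reach_induce S j (Sj j) (fun v hv => hv) ⟨x, hx⟩ ⟨y, hy⟩ w
      have copy_nonempty : ∀ j, ∃ x, ((j, x) : DCellVtx n (k+1)) ∈ Sᶜ := by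
        intro j
        have h1 := hSj_le j
        have h2 := Set.ncard_add_ncard_compl (Sj j) (Set.toFinite _) (Set.toFinite _)
        have hpos : 0 < ((Sj j)ᶜ).ncard := by omega
        obtain ⟨x, hx⟩ := (Set.ncard_pos (Set.toFinite _)).mp hpos
        exact ⟨x, hx⟩
      by_cases hall : ∀ j, (Sj j).ncard + 2 ≤ n + k
      · -- no bad copy
        set H : SimpleGraph (Fin (dcellT n k + 1)) :=
          { Adj := fun i j => i ≠ j ∧ ∃ u v : DCellVtx n (k+1), u ∈ Sᶜ ∧ v ∈ Sᶜ ∧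
              u.1 = i ∧ v.1 = j ∧ (DCell n (k+1)).Adj u v,
            symm := by
              constructor
              rintro i j ⟨hij, u, v, hu, hv, hui, hvj, hadj⟩
              exact ⟨hij.symm, v, u, hv, hu, hvj, hui, hadj.symm⟩,
            loopless := ⟨fun i h => h.1 rfl⟩ } with hHdef
        apply connected_of_quotient ((DCell n (k+1)).induce Sᶜ)
          (fun w => w.1.1) H
        · intro j
          obtain ⟨x, hx⟩ := copy_nonempty j
          exact ⟨⟨(j, x), hx⟩, rfl⟩
        · rintro ⟨⟨i1, x⟩, hux⟩ ⟨⟨i2, y⟩, hvy⟩ h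
          dsimp only at h
          subst h
          exact copy_reach i1 (hall i1) x y hux hvy
        · rintro i j ⟨hij, u, v, hu, hv, hui, hvj, hadj⟩
          exact ⟨⟨u, hu⟩, ⟨v, hv⟩, hui, hvj, hadj⟩
        · -- H is connected: few nonedges
          apply connected_of_few_nonedges H
          have hkey : ∀ e ∈ {e : Sym2 (Fin (dcellT n k + 1)) | ¬ e.IsDiag ∧ e ∉ H.edgeSet},
              ∃ w, w ∈ S ∧ Sym2.map Prod.fst (s(w, crossFn hn1 k w)) = e := by
            intro e he
            induction e using Sym2.ind with
            | _ i j =>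
              obtain ⟨hdiag, hedge⟩ := he
              rw [Sym2.mk_isDiag_iff] at hdiag
              rw [SimpleGraph.mem_edgeSet] at hedge
              have hno : ∀ u v : DCellVtx n (k+1), u ∈ Sᶜ → v ∈ Sᶜ →
                  u.1 = i → v.1 = j → ¬ (DCell n (k+1)).Adj u v := by
                intro u v hu hv hui hvj hadj
                exact hedge ⟨hdiag, u, v, hu, hv, hui, hvj, hadj⟩
              have hvne : i.val ≠ j.val := fun h => hdiag (Fin.ext h)
              rcases Nat.lt_or_ge i.val j.val with hlt | hge
              · obtain ⟨x, y, hxy⟩ := cross_between hn1 k i j hlt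
                by_cases hxS : ((i, x) : DCellVtx n (k+1)) ∈ S
                · refine ⟨(i, x), hxS, ?_⟩
                  have hc : ((j, y) : DCellVtx n (k+1)) = crossFn hn1 k (i, x) :=
                    crossFn_uniq hn1 k _ _ hxy (fun h => hvne (congrArg Fin.val h).symm)
                  rw [← hc, Sym2.map_pair_eq]
                · by_cases hyS : ((j, y) : DCellVtx n (k+1)) ∈ S
                  · refine ⟨(j, y), hyS, ?_⟩
                    have hc : ((i, x) : DCellVtx n (k+1)) = crossFn hn1 k (j, y) :=
                      crossFn_uniq hn1 k _ _ ((DCell n (k+1)).adj_symm hxy)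
                        (fun h => hvne (congrArg Fin.val h))
                    rw [← hc, Sym2.map_pair_eq, Sym2.eq_swap]
                  · exact absurd hxy (hno (i, x) (j, y) hxS hyS rfl rfl)
              · have hlt : j.val < i.val := by omega
                obtain ⟨x, y, hxy⟩ := cross_between hn1 k j i hlt
                by_cases hxS : ((j, x) : DCellVtx n (k+1)) ∈ S
                · refine ⟨(j, x), hxS, ?_⟩
                  have hc : ((i, y) : DCellVtx n (k+1)) = crossFn hn1 k (j, x) :=
                    crossFn_uniq hn1 k _ _ hxy (fun h => hvne (congrArg Fin.val h))
                  rw [← hc, Sym2.map_pair_eq, Sym2.eq_swap]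
                · by_cases hyS : ((i, y) : DCellVtx n (k+1)) ∈ S
                  · refine ⟨(i, y), hyS, ?_⟩
                    have hc : ((j, x) : DCellVtx n (k+1)) = crossFn hn1 k (i, y) :=
                      crossFn_uniq hn1 k _ _ ((DCell n (k+1)).adj_symm hxy)
                        (fun h => hvne (congrArg Fin.val h).symm)
                    rw [← hc, Sym2.map_pair_eq]
                  · exact absurd ((DCell n (k+1)).adj_symm hxy)
                      (hno (i, y) (j, x) hyS hxS rfl rfl)
          -- now bound the number of nonedges
          obtain ⟨x0, _⟩ := copy_nonempty 0
          set φ : Sym2 (Fin (dcellT n k + 1)) → DCellVtx n (k+1) := fun e =>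
            if h : ∃ w, w ∈ S ∧ Sym2.map Prod.fst (s(w, crossFn hn1 k w)) = e then
              h.choose else ((0 : Fin (dcellT n k + 1)), x0) with hφdef
          have hle : {e : Sym2 (Fin (dcellT n k + 1)) | ¬ e.IsDiag ∧ e ∉ H.edgeSet}.ncard
              ≤ S.ncard := by
            apply Set.ncard_le_ncard_of_injOn φ
            · intro e he
              have hx := hkey e he
              have hφe : φ e = hx.choose := dif_pos hx
              rw [hφe]; exact hx.choose_spec.1
            · intro e1 h1 e2 h2 heq
              have hx1 := hkey e1 h1
              have hx2 := hkey e2 h2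
              have heq' : hx1.choose = hx2.choose := (dif_pos hx1).symm.trans (heq.trans (dif_pos hx2))
              have s1 := hx1.choose_spec.2
              have s2 := hx2.choose_spec.2
              rw [← s1, ← s2]; exact congrArg (fun w => Sym2.map Prod.fst s(w, crossFn hn1 k w)) heq'
          have hcardF : Nat.card (Fin (dcellT n k + 1)) = dcellT n k + 1 := by
            simp
          omega
      · -- bad copy j0
        push_neg at hall
        obtain ⟨j0, hj0⟩ := hall
        have hj0ge : n + k - 1 ≤ (Sj j0).ncard := by omega
        have hsub : ∀ w ∈ S, w.1 = j0 := by
          by_contra hcon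
          push_neg at hcon
          obtain ⟨w0, hw0S, hw0ne⟩ := hcon
          have himg : insert w0 ((fun v => ((j0, v) : DCellVtx n (k+1))) '' (Sj j0)) ⊆ S := by
            apply Set.insert_subset_iff.mpr
            exact ⟨hw0S, by rintro _ ⟨v, hv, rfl⟩; exact hv⟩
          have hnm : w0 ∉ (fun v => ((j0, v) : DCellVtx n (k+1))) '' (Sj j0) := by
            rintro ⟨v, _, rfl⟩
            exact hw0ne rfl
          have h1 : (insert w0 ((fun v => ((j0, v) : DCellVtx n (k+1))) '' (Sj j0))).ncard
              = (Sj j0).ncard + 1 := by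
            erw [Set.ncard_insert_of_notMem hnm (Set.toFinite _),
              Set.ncard_image_of_injective _ (fun x y h => congrArg Prod.snd h)]
          have h2 := Set.ncard_le_ncard himg (Set.toFinite _)
          have h3 : (Sj j0).ncard + 1 ≤ S.ncard := h1.symm.trans_le h2
          omega
        have hSjempty : ∀ j, j ≠ j0 → Sj j = ∅ := by
          intro j hj
          ext v
          simp only [Set.mem_empty_iff_false, iff_false]
          exact fun hv => hj (hsub (j, v) hv)
        have hnotS : ∀ w : DCellVtx n (k+1), w.1 ≠ j0 → w ∈ Sᶜ :=
          fun w hw hwS => hw (hsub w hwS)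
        set f : ↥(Sᶜ) → ↥(({j0} : Set (Fin (dcellT n k + 1)))ᶜ) := fun w =>
          if h : w.1.1 = j0 then
            ⟨(crossFn hn1 k w.1).1, by
              simp only [Set.mem_compl_iff, Set.mem_singleton_iff]
              exact fun hc => crossFn_fst hn1 k w.1 (hc.trans h.symm)⟩
          else ⟨w.1.1, by
            simp only [Set.mem_compl_iff, Set.mem_singleton_iff]; exact h⟩ with hfdef
        apply connected_of_quotient ((DCell n (k+1)).induce Sᶜ) f
          (⊤ : SimpleGraph ↥(({j0} : Set (Fin (dcellT n k + 1)))ᶜ))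
        · -- surjective
          rintro ⟨j, hj⟩
          simp only [Set.mem_compl_iff, Set.mem_singleton_iff] at hj
          obtain ⟨x, hx⟩ := copy_nonempty j
          refine ⟨⟨(j, x), hx⟩, ?_⟩
          simp only [hfdef, dif_neg hj]
        · -- fibers reachable
          have hrep : ∀ u : ↥(Sᶜ), ∃ r : ↥(Sᶜ), r.1.1 = (f u).1 ∧
              ((DCell n (k+1)).induce Sᶜ).Reachable u r := by
            intro u
            by_cases h : u.1.1 = j0
            · refine ⟨⟨crossFn hn1 k u.1, hnotS _ (fun hc => crossFn_fst hn1 k u.1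
                (hc.trans h.symm))⟩, ?_, ?_⟩
              · simp only [hfdef, dif_pos h]
              · exact SimpleGraph.Adj.reachable (crossFn_adj hn1 k u.1)
            · exact ⟨u, by simp only [hfdef, dif_neg h], SimpleGraph.Reachable.refl u⟩
          intro u v huv
          obtain ⟨⟨⟨a1, a2⟩, ha⟩, hru1, hru2⟩ := hrep u
          obtain ⟨⟨⟨b1, b2⟩, hb⟩, hrv1, hrv2⟩ := hrep v
          rw [← huv] at hrv1
          dsimp only at hru1 hrv1
          subst hru1
          subst hrv1
          have hjne : (f u).1 ≠ j0 := by
            have := (f u).2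
            simpa only [Set.mem_compl_iff, Set.mem_singleton_iff] using this
          have hgood : (Sj (f u).1).ncard + 2 ≤ n + k := by
            rw [hSjempty _ hjne]
            simp only [Set.ncard_empty]
            omega
          exact hru2.trans ((copy_reach (f u).1 hgood a2 b2 ha hb).trans hrv2.symm)
        · -- lift edges of ⊤
          rintro ⟨i, hi⟩ ⟨j, hj⟩ hadj
          simp only [Set.mem_compl_iff, Set.mem_singleton_iff] at hi hj
          rw [SimpleGraph.top_adj] at hadj
          have hij : i ≠ j := fun h => hadj (Subtype.ext h)
          have hvne : i.val ≠ j.val := fun h => hij (Fin.ext h)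
          rcases Nat.lt_or_ge i.val j.val with hlt | hge
          · obtain ⟨x, y, hxy⟩ := cross_between hn1 k i j hlt
            refine ⟨⟨(i, x), hnotS _ hi⟩, ⟨(j, y), hnotS _ hj⟩, ?_, ?_, hxy⟩
            · simp only [hfdef, dif_neg hi]
            · simp only [hfdef, dif_neg hj]
          · have hlt : j.val < i.val := by omega
            obtain ⟨x, y, hxy⟩ := cross_between hn1 k j i hlt
            refine ⟨⟨(i, y), hnotS _ hi⟩, ⟨(j, x), hnotS _ hj⟩, ?_, ?_,
              (DCell n (k+1)).adj_symm hxy⟩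
            · simp only [hfdef, dif_neg hi]
            · simp only [hfdef, dif_neg hj]
        · -- ⊤ is connected
          have hne1 : Nonempty ↥(({j0} : Set (Fin (dcellT n k + 1)))ᶜ) := by
            have h1 := Set.ncard_add_ncard_compl ({j0} : Set (Fin (dcellT n k + 1)))
              (Set.toFinite _) (Set.toFinite _)
            rw [Set.ncard_singleton] at h1
            have h2 : Nat.card (Fin (dcellT n k + 1)) = dcellT n k + 1 := by simp
            have hpos : 0 < (({j0} : Set (Fin (dcellT n k + 1)))ᶜ).ncard := by omega
            exact ((Set.ncard_pos (Set.toFinite _)).mp hpos).to_subtype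
          apply connected_of_few_nonedges
          have hempty : {e : Sym2 ↥(({j0} : Set (Fin (dcellT n k + 1)))ᶜ) |
              ¬ e.IsDiag ∧ e ∉ (⊤ : SimpleGraph _).edgeSet} = ∅ := by
            ext e
            simp only [Set.mem_setOf_eq, Set.mem_empty_iff_false, iff_false, not_and,
              SimpleGraph.edgeSet_top, Set.mem_setOf_eq, not_not]
            exact fun h => by simpa using h
          rw [hempty, Set.ncard_empty, Nat.card_coe_set_eq]
          have h1 := Set.ncard_add_ncard_compl ({j0} : Set (Fin (dcellT n k + 1)))
            (Set.toFinite _) (Set.toFinite _)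
          rw [Set.ncard_singleton] at h1
          have h2 : Nat.card (Fin (dcellT n k + 1)) = dcellT n k + 1 := by simp
          omega

end DCellAux
namespace DCellAux
variable {n : ℕ}

theorem conn_edge (hn : 2 ≤ n) : ∀ k (F : Set (Sym2 (DCellVtx n k))),
    F.ncard + 2 ≤ n + k → ((DCell n k).deleteEdges F).Connected
  | 0, F, hF => by
      have hcard := card_vtx n 0
      have ht0 : dcellT n 0 = n := rfl
      have hne : Nonempty (DCellVtx n 0) :=
        (Nat.card_pos_iff.mp (by omega)).1
      apply connected_of_few_nonedges
      have hsubset : {e : Sym2 (DCellVtx n 0) | ¬ e.IsDiag ∧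
          e ∉ ((DCell n 0).deleteEdges F).edgeSet} ⊆ F := by
        intro e he
        obtain ⟨hdiag, hedge⟩ := he
        rw [SimpleGraph.edgeSet_deleteEdges] at hedge
        by_contra hcon
        apply hedge
        refine ⟨?_, hcon⟩
        revert hdiag
        induction e using Sym2.ind with
        | _ x y =>
          intro hdiag
          rw [Sym2.mk_isDiag_iff] at hdiag
          rw [SimpleGraph.mem_edgeSet]
          exact hdiag
      have hle := Set.ncard_le_ncard hsubset (Set.toFinite _)
      omega
  | k+1, F, hF => by
      classical
      have hn1 : 1 ≤ n := by omega
      have ht := dcellT_ge hn k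
      have htpos := dcellT_pos hn1 k
      have hcardV := card_vtx n k
      have hFle : F.ncard ≤ n + k - 1 := by omega
      have hneV : Nonempty (DCellVtx n k) := (Nat.card_pos_iff.mp (by omega)).1
      obtain ⟨x0⟩ := hneV
      set Fj : Fin (dcellT n k + 1) → Set (Sym2 (DCellVtx n k)) :=
        fun j => {e | Sym2.map (fun v => ((j, v) : DCellVtx n (k+1))) e ∈ F} with hFjdef
      have hinjj : ∀ j : Fin (dcellT n k + 1),
          Function.Injective (fun v => ((j, v) : DCellVtx n (k+1))) :=
        fun j x y h => congrArg Prod.snd h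
      have hFj_le : ∀ j, (Fj j).ncard ≤ F.ncard := fun j =>
        Set.ncard_le_ncard_of_injOn (Sym2.map (fun v => ((j, v) : DCellVtx n (k+1))))
          (fun e he => he) (fun x _ y _ h => Sym2.map.injective (hinjj j) h) (Set.toFinite _)
      have copy_reach : ∀ j, (Fj j).ncard + 2 ≤ n + k → ∀ x y,
          ((DCell n (k+1)).deleteEdges F).Reachable (j, x) (j, y) := by
        intro j hj x y
        have hconn := conn_edge hn k (Fj j) hj
        obtain ⟨w⟩ := hconn.preconnected x y
        refine lift_reach_del F j (Fj j) ?_ w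
        intro x' y' hxy hFm
        apply hxy
        show Sym2.map (fun v => ((j, v) : DCellVtx n (k+1))) s(x', y') ∈ F
        rw [Sym2.map_pair_eq]
        exact hFm
      by_cases hall : ∀ j, (Fj j).ncard + 2 ≤ n + k
      · -- no bad copy
        set H : SimpleGraph (Fin (dcellT n k + 1)) :=
          { Adj := fun i j => i ≠ j ∧ ∃ u v : DCellVtx n (k+1), u.1 = i ∧ v.1 = j ∧
              ((DCell n (k+1)).deleteEdges F).Adj u v,
            symm := by
              constructor
              rintro i j ⟨hij, u, v, hui, hvj, hadj⟩
              exact ⟨hij.symm, v, u, hvj, hui, hadj.symm⟩,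
            loopless := ⟨fun i h => h.1 rfl⟩ } with hHdef
        apply connected_of_quotient ((DCell n (k+1)).deleteEdges F)
          (fun w => w.1) H
        · exact fun j => ⟨(j, x0), rfl⟩
        · rintro ⟨i1, x⟩ ⟨i2, y⟩ h
          dsimp only at h
          subst h
          exact copy_reach i1 (hall i1) x y
        · rintro i j ⟨hij, u, v, hui, hvj, hadj⟩
          exact ⟨u, v, hui, hvj, hadj⟩
        · apply connected_of_few_nonedges H
          have hkey : ∀ e ∈ {e : Sym2 (Fin (dcellT n k + 1)) | ¬ e.IsDiag ∧ e ∉ H.edgeSet},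
              ∃ e' , e' ∈ F ∧ Sym2.map Prod.fst e' = e := by
            intro e he
            induction e using Sym2.ind with
            | _ i j =>
              obtain ⟨hdiag, hedge⟩ := he
              rw [Sym2.mk_isDiag_iff] at hdiag
              rw [SimpleGraph.mem_edgeSet] at hedge
              have hno : ∀ u v : DCellVtx n (k+1), u.1 = i → v.1 = j →
                  ¬ ((DCell n (k+1)).deleteEdges F).Adj u v := by
                intro u v hui hvj hadj
                exact hedge ⟨hdiag, u, v, hui, hvj, hadj⟩
              have hvne : i.val ≠ j.val := fun h => hdiag (Fin.ext h)
              rcases Nat.lt_or_ge i.val j.val with hlt | hge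
              · obtain ⟨x, y, hxy⟩ := cross_between hn1 k i j hlt
                refine ⟨s(((i, x) : DCellVtx n (k+1)), ((j, y) : DCellVtx n (k+1))), ?_, ?_⟩
                · by_contra hcon
                  exact hno (i, x) (j, y) rfl rfl
                    (SimpleGraph.deleteEdges_adj.mpr ⟨hxy, hcon⟩)
                · exact Sym2.map_pair_eq _ _ _
              · have hlt : j.val < i.val := by omega
                obtain ⟨x, y, hxy⟩ := cross_between hn1 k j i hlt
                refine ⟨s(((j, x) : DCellVtx n (k+1)), ((i, y) : DCellVtx n (k+1))), ?_, ?_⟩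
                · by_contra hcon
                  exact hno (i, y) (j, x) rfl rfl
                    (SimpleGraph.deleteEdges_adj.mpr ⟨(DCell n (k+1)).adj_symm hxy,
                      fun h => hcon (Sym2.eq_swap ▸ h)⟩)
                · exact (Sym2.map_pair_eq _ _ _).trans Sym2.eq_swap
          set φ : Sym2 (Fin (dcellT n k + 1)) → Sym2 (DCellVtx n (k+1)) := fun e =>
            if h : ∃ e', e' ∈ F ∧ Sym2.map Prod.fst e' = e then h.choose
            else s(((0 : Fin (dcellT n k + 1)), x0), ((0 : Fin (dcellT n k + 1)), x0))
            with hφdef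
          have hle : {e : Sym2 (Fin (dcellT n k + 1)) | ¬ e.IsDiag ∧ e ∉ H.edgeSet}.ncard
              ≤ F.ncard := by
            apply Set.ncard_le_ncard_of_injOn φ
            · intro e he
              have hx := hkey e he
              simp only [hφdef, dif_pos hx]
              exact hx.choose_spec.1
            · intro e1 h1 e2 h2 heq
              have hx1 := hkey e1 h1
              have hx2 := hkey e2 h2
              simp only [hφdef, dif_pos hx1, dif_pos hx2] at heq
              have s1 := hx1.choose_spec.2
              have s2 := hx2.choose_spec.2
              rw [← s1, ← s2, heq]
          have hcardF : Nat.card (Fin (dcellT n k + 1)) = dcellT n k + 1 := by simp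
          omega
      · -- bad copy j0
        push_neg at hall
        obtain ⟨j0, hj0⟩ := hall
        have hj0ge : n + k - 1 ≤ (Fj j0).ncard := by omega
        have hsub : ∀ e ∈ F, ∃ x y : DCellVtx n k,
            e = s(((j0, x) : DCellVtx n (k+1)), ((j0, y) : DCellVtx n (k+1))) := by
          intro e0 he0F
          by_contra he0n
          have himg : insert e0 ((Sym2.map (fun v => ((j0, v) : DCellVtx n (k+1)))) ''
              (Fj j0)) ⊆ F := by
            apply Set.insert_subset_iff.mpr
            exact ⟨he0F, by rintro _ ⟨e', he', rfl⟩; exact he'⟩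
          have hnm : e0 ∉ (Sym2.map (fun v => ((j0, v) : DCellVtx n (k+1)))) '' (Fj j0) := by
            rintro ⟨e', hmem, heq⟩
            revert hmem heq
            induction e' using Sym2.ind with
            | _ x y =>
              intro hmem heq
              exact he0n ⟨x, y, heq.symm.trans (Sym2.map_pair_eq _ _ _)⟩
          have h1 : (insert e0 ((Sym2.map (fun v => ((j0, v) : DCellVtx n (k+1)))) ''
              (Fj j0))).ncard = (Fj j0).ncard + 1 := by
            erw [Set.ncard_insert_of_notMem hnm (Set.toFinite _),
              Set.ncard_image_of_injective _ (Sym2.map.injective (hinjj j0))]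
          have h2 := Set.ncard_le_ncard himg (Set.toFinite _)
          have h3 : (Fj j0).ncard + 1 ≤ F.ncard := h1.symm.trans_le h2
          omega
        have hcross : ∀ u v : DCellVtx n (k+1), u.1 ≠ v.1 → s(u, v) ∉ F := by
          intro u v hne hmem
          obtain ⟨x, y, hxy⟩ := hsub _ hmem
          replace hxy := Sym2.eq_iff.mp hxy
          rcases hxy with ⟨h1, h2⟩ | ⟨h1, h2⟩
          · exact hne ((congrArg Prod.fst h1).trans (congrArg Prod.fst h2).symm)
          · exact hne ((congrArg Prod.fst h1).trans (congrArg Prod.fst h2).symm)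
        have hgoodj : ∀ j, j ≠ j0 → (Fj j).ncard + 2 ≤ n + k := by
          intro j hj
          have hempty : Fj j = ∅ := by
            ext e
            simp only [Set.mem_empty_iff_false, iff_false]
            revert e
            intro e
            induction e using Sym2.ind with
            | _ x y =>
              intro hmem
              have hmem' : Sym2.map (fun v => ((j, v) : DCellVtx n (k+1))) s(x, y) ∈ F := hmem
              rw [Sym2.map_pair_eq] at hmem'
              obtain ⟨x', y', hxy⟩ := hsub _ hmem'
              replace hxy := Sym2.eq_iff.mp hxy
              rcases hxy with ⟨h1, _⟩ | ⟨h1, _⟩ <;> exact hj (congrArg Prod.fst h1)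
          rw [hempty, Set.ncard_empty]
          omega
        set f : DCellVtx n (k+1) → ↥(({j0} : Set (Fin (dcellT n k + 1)))ᶜ) := fun w =>
          if h : w.1 = j0 then
            ⟨(crossFn hn1 k w).1, by
              simp only [Set.mem_compl_iff, Set.mem_singleton_iff]
              exact fun hc => crossFn_fst hn1 k w (hc.trans h.symm)⟩
          else ⟨w.1, by
            simp only [Set.mem_compl_iff, Set.mem_singleton_iff]; exact h⟩ with hfdef
        apply connected_of_quotient ((DCell n (k+1)).deleteEdges F) f
          (⊤ : SimpleGraph ↥(({j0} : Set (Fin (dcellT n k + 1)))ᶜ))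
        · rintro ⟨j, hj⟩
          simp only [Set.mem_compl_iff, Set.mem_singleton_iff] at hj
          exact ⟨(j, x0), by simp only [hfdef, dif_neg hj]⟩
        · have hrep : ∀ u : DCellVtx n (k+1), ∃ r : DCellVtx n (k+1), r.1 = (f u).1 ∧
              ((DCell n (k+1)).deleteEdges F).Reachable u r := by
            intro u
            by_cases h : u.1 = j0
            · refine ⟨crossFn hn1 k u, by simp only [hfdef, dif_pos h], ?_⟩
              refine SimpleGraph.Adj.reachable (SimpleGraph.deleteEdges_adj.mpr
                ⟨crossFn_adj hn1 k u, hcross u _ (Ne.symm (crossFn_fst hn1 k u))⟩)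
            · exact ⟨u, by simp only [hfdef, dif_neg h], SimpleGraph.Reachable.refl u⟩
          intro u v huv
          obtain ⟨⟨a1, a2⟩, hru1, hru2⟩ := hrep u
          obtain ⟨⟨b1, b2⟩, hrv1, hrv2⟩ := hrep v
          rw [← huv] at hrv1
          dsimp only at hru1 hrv1
          subst hru1
          subst hrv1
          have hjne : (f u).1 ≠ j0 := by
            have := (f u).2
            simpa only [Set.mem_compl_iff, Set.mem_singleton_iff] using this
          exact hru2.trans ((copy_reach (f u).1 (hgoodj _ hjne) a2 b2).trans hrv2.symm)
        · rintro ⟨i, hi⟩ ⟨j, hj⟩ hadj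
          simp only [Set.mem_compl_iff, Set.mem_singleton_iff] at hi hj
          rw [SimpleGraph.top_adj] at hadj
          have hij : i ≠ j := fun h => hadj (Subtype.ext h)
          have hvne : i.val ≠ j.val := fun h => hij (Fin.ext h)
          rcases Nat.lt_or_ge i.val j.val with hlt | hge
          · obtain ⟨x, y, hxy⟩ := cross_between hn1 k i j hlt
            refine ⟨(i, x), (j, y), ?_, ?_, SimpleGraph.deleteEdges_adj.mpr
              ⟨hxy, hcross _ _ (fun h => hij h)⟩⟩
            · simp only [hfdef, dif_neg hi]
            · simp only [hfdef, dif_neg hj]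
          · have hlt : j.val < i.val := by omega
            obtain ⟨x, y, hxy⟩ := cross_between hn1 k j i hlt
            refine ⟨(i, y), (j, x), ?_, ?_, SimpleGraph.deleteEdges_adj.mpr
              ⟨(DCell n (k+1)).adj_symm hxy, hcross _ _ (fun h => hij h)⟩⟩
            · simp only [hfdef, dif_neg hi]
            · simp only [hfdef, dif_neg hj]
        · have hne1 : Nonempty ↥(({j0} : Set (Fin (dcellT n k + 1)))ᶜ) := by
            have h1 := Set.ncard_add_ncard_compl ({j0} : Set (Fin (dcellT n k + 1)))
              (Set.toFinite _) (Set.toFinite _)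
            rw [Set.ncard_singleton] at h1
            have h2 : Nat.card (Fin (dcellT n k + 1)) = dcellT n k + 1 := by simp
            have hpos : 0 < (({j0} : Set (Fin (dcellT n k + 1)))ᶜ).ncard := by omega
            exact ((Set.ncard_pos (Set.toFinite _)).mp hpos).to_subtype
          apply connected_of_few_nonedges
          have hempty : {e : Sym2 ↥(({j0} : Set (Fin (dcellT n k + 1)))ᶜ) |
              ¬ e.IsDiag ∧ e ∉ (⊤ : SimpleGraph _).edgeSet} = ∅ := by
            ext e
            simp only [Set.mem_setOf_eq, Set.mem_empty_iff_false, iff_false, not_and,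
              SimpleGraph.edgeSet_top, Set.mem_setOf_eq, not_not]
            exact fun h => by simpa using h
          rw [hempty, Set.ncard_empty, Nat.card_coe_set_eq]
          have h1 := Set.ncard_add_ncard_compl ({j0} : Set (Fin (dcellT n k + 1)))
            (Set.toFinite _) (Set.toFinite _)
          rw [Set.ncard_singleton] at h1
          have h2 : Nat.card (Fin (dcellT n k + 1)) = dcellT n k + 1 := by simp
          omega

end DCellAux
namespace DCellAux

theorem exists_adj_of_reachable_ne {V : Type*} {G : SimpleGraph V} {a b : V}
    (h : G.Reachable a b) (hne : a ≠ b) : ∃ c, G.Adj a c := by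
  obtain ⟨w⟩ := h
  cases w with
  | nil => exact absurd rfl hne
  | cons hadj _ => exact ⟨_, hadj⟩

end DCellAux

/-- `D_{k,n}` is `(n+k-1)`-regular, with vertex connectivity and edge connectivity
both equal to `n + k - 1`. -/
theorem stmt4 (n k : ℕ) (hn : 2 ≤ n) :
    (∀ v : DCellVtx n k, ((DCell n k).neighborSet v).ncard = n + k - 1) ∧
    vertexConnectivity (DCell n k) = n + k - 1 ∧
    edgeConnectivity (DCell n k) = n + k - 1 := by
  classical
  have hn1 : 1 ≤ n := by omega
  have ht := DCellAux.dcellT_ge hn k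
  have hcardV := DCellAux.card_vtx n k
  have hdeg := DCellAux.degree_eq hn k
  have hNE : Nonempty (DCellVtx n k) := (Nat.card_pos_iff.mp (by omega)).1
  have hNT : Nontrivial (DCellVtx n k) := by
    rw [← Finite.one_lt_card_iff_nontrivial]
    omega
  obtain ⟨v0⟩ := hNE
  refine ⟨hdeg, ?_, ?_⟩
  · -- vertex connectivity
    apply le_antisymm
    · -- upper bound
      apply Nat.sInf_le
      refine ⟨(DCell n k).neighborSet v0, hdeg v0, ?_⟩
      by_cases hsub : (((DCell n k).neighborSet v0)ᶜ : Set (DCellVtx n k)).Subsingleton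
      · exact Or.inr hsub
      · left
        rw [Set.not_subsingleton_iff] at hsub
        obtain ⟨a, ha, b, hb, hab⟩ := hsub
        have hv0 : v0 ∈ ((DCell n k).neighborSet v0)ᶜ := fun h =>
          (DCell n k).loopless.irrefl v0 h
        intro hconn
        have hu : ∃ u, u ∈ ((DCell n k).neighborSet v0)ᶜ ∧ u ≠ v0 := by
          by_cases hav : a = v0
          · exact ⟨b, hb, fun h => hab (h.trans hav.symm).symm⟩
          · exact ⟨a, ha, hav⟩
        obtain ⟨u, huc, hune⟩ := hu
        have hreach := hconn.preconnected ⟨v0, hv0⟩ ⟨u, huc⟩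
        obtain ⟨c, hc⟩ := DCellAux.exists_adj_of_reachable_ne hreach
          (fun h => hune (congrArg Subtype.val h).symm)
        exact c.2 hc
    · -- lower bound
      refine le_csInf ?_ ?_
      · refine ⟨(n + k - 1), (DCell n k).neighborSet v0, hdeg v0, ?_⟩
        by_cases hsub : (((DCell n k).neighborSet v0)ᶜ : Set (DCellVtx n k)).Subsingleton
        · exact Or.inr hsub
        · left
          rw [Set.not_subsingleton_iff] at hsub
          obtain ⟨a, ha, b, hb, hab⟩ := hsub
          have hv0 : v0 ∈ ((DCell n k).neighborSet v0)ᶜ := fun h =>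
            (DCell n k).loopless.irrefl v0 h
          intro hconn
          have hu : ∃ u, u ∈ ((DCell n k).neighborSet v0)ᶜ ∧ u ≠ v0 := by
            by_cases hav : a = v0
            · exact ⟨b, hb, fun h => hab (h.trans hav.symm).symm⟩
            · exact ⟨a, ha, hav⟩
          obtain ⟨u, huc, hune⟩ := hu
          have hreach := hconn.preconnected ⟨v0, hv0⟩ ⟨u, huc⟩
          obtain ⟨c, hc⟩ := DCellAux.exists_adj_of_reachable_ne hreach
            (fun h => hune (congrArg Subtype.val h).symm)
          exact c.2 hc
      · rintro m ⟨S, rfl, hdisj⟩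
        by_contra hlt
        push_neg at hlt
        have hS2 : S.ncard + 2 ≤ n + k := by omega
        rcases hdisj with hdisc | hsub
        · exact hdisc (DCellAux.conn_vertex hn k S hS2)
        · have hcompl := Set.ncard_add_ncard_compl S (Set.toFinite _) (Set.toFinite _)
          have h2 : 1 < (Sᶜ).ncard := by omega
          obtain ⟨a, ha, b, hb, hab⟩ := (Set.one_lt_ncard (Set.toFinite _)).mp h2
          exact hab (hsub ha hb)
  · -- edge connectivity
    apply le_antisymm
    · apply Nat.sInf_le
      refine ⟨(fun u => s(v0, u)) '' ((DCell n k).neighborSet v0), ?_, ?_⟩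
      · rw [Set.ncard_image_of_injOn, hdeg v0]
        intro x hx y hy hxy
        rw [Sym2.eq_iff] at hxy
        rcases hxy with ⟨_, h⟩ | ⟨h1, _⟩
        · exact h
        · exact absurd h1 ((DCell n k).ne_of_adj hy)
      · intro hconn
        obtain ⟨u, hune⟩ := exists_ne v0
        have hreach := hconn.preconnected v0 u
        obtain ⟨c, hc⟩ := DCellAux.exists_adj_of_reachable_ne hreach (Ne.symm hune)
        rw [SimpleGraph.deleteEdges_adj] at hc
        exact hc.2 ⟨c, hc.1, rfl⟩
    · refine le_csInf ?_ ?_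
      · refine ⟨(n + k - 1), (fun u => s(v0, u)) '' ((DCell n k).neighborSet v0), ?_, ?_⟩
        · rw [Set.ncard_image_of_injOn, hdeg v0]
          intro x hx y hy hxy
          rw [Sym2.eq_iff] at hxy
          rcases hxy with ⟨_, h⟩ | ⟨h1, _⟩
          · exact h
          · exact absurd h1 ((DCell n k).ne_of_adj hy)
        · intro hconn
          obtain ⟨u, hune⟩ := exists_ne v0
          have hreach := hconn.preconnected v0 u
          obtain ⟨c, hc⟩ := DCellAux.exists_adj_of_reachable_ne hreach (Ne.symm hune)
          rw [SimpleGraph.deleteEdges_adj] at hc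
          exact hc.2 ⟨c, hc.1, rfl⟩
      · rintro m ⟨F, rfl, hdisc⟩
        by_contra hlt
        push_neg at hlt
        exact hdisc (DCellAux.conn_edge hn k F (by omega))
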